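/- arXiv:2211.03220 — 2 statements merged into one kernel-verified Lean document; each statement's English description precedes it below -/
import Mathlib

section
/- For any nonnegative integers s, t, u, n, r satisfying s·2^t ≤ n < (s+1)·2^t − 1 and n + 1 − (s−u)·2^t ≤ r < (u+1)·2^t, the binomial coefficient C(n, r) is even. -/
/-- If `m < q` then some binary digit of `q` is `1` where that of `m` is `0`. -/
lemma exists_testBit_of_lt (m q : ℕ) (h : m < q) :
    ∃ i, q.testBit i = true ∧ m.testBit i = false := by
  by_contra hc
  push_neg at hc
  have hq : q &&& m = q := by
    apply Nat.eq_of_testBit_eq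
    intro i
    rw [Nat.testBit_and]
    cases hqi : q.testBit i with
    | false => simp
    | true =>
      have := hc i hqi
      simp at this
      simp [this]
  have : q ≤ m := hq ▸ Nat.and_le_right
  omega

/-- For nonnegative integers s, t, u, n, r with s·2^t ≤ n < (s+1)·2^t − 1 and
n + 1 − (s−u)·2^t ≤ r < (u+1)·2^t, the binomial coefficient C(n, r) is even. -/
theorem choose_even_of_triangle (s t u n r : ℕ)
    (h1 : (s : ℤ) * 2 ^ t ≤ n)
    (h2 : (n : ℤ) < (s + 1) * 2 ^ t - 1)
    (h3 : (n : ℤ) + 1 - ((s : ℤ) - u) * 2 ^ t ≤ r)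
    (h4 : (r : ℤ) < ((u : ℤ) + 1) * 2 ^ t) :
    Even (n.choose r) := by
  have hc : ((2:ℤ)^t) = ((2^t:ℕ):ℤ) := by push_cast; ring
  rw [hc] at h1 h2 h3 h4
  set P : ℕ := 2 ^ t with hPdef
  have hP : 0 < P := Nat.pow_pos (by norm_num)
  -- n / P = s
  have hn2 : n < (s + 1) * P := by
    have : (n:ℤ) < (((s+1) * P : ℕ) : ℤ) := by push_cast; linarith
    exact_mod_cast this
  have hn1 : s * P ≤ n := by exact_mod_cast h1
  have hsdiv : n / P = s := Nat.div_eq_of_lt_le hn1 hn2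
  -- r / P = u
  have hr1 : u * P ≤ r := by
    have : ((u * P : ℕ) : ℤ) ≤ r := by push_cast; linarith
    exact_mod_cast this
  have hr2 : r < (u + 1) * P := by
    have : (r:ℤ) < (((u+1) * P : ℕ) : ℤ) := by push_cast; linarith
    exact_mod_cast this
  have hudiv : r / P = u := Nat.div_eq_of_lt_le hr1 hr2
  -- residues
  set m : ℕ := n % P with hm
  set q : ℕ := r % P with hq
  have hneq : s * P + m = n := by rw [hm, ← hsdiv]; rw [Nat.mul_comm]; exact Nat.div_add_mod n P
  have hreq : u * P + q = r := by rw [hq, ← hudiv]; rw [Nat.mul_comm]; exact Nat.div_add_mod r P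
  have hmq : m < q := by
    have hmz : (m : ℤ) = n - s * P := by
      have := congrArg (fun x : ℕ => (x : ℤ)) hneq
      push_cast at this; linarith
    have hqz : (q : ℤ) = r - u * P := by
      have := congrArg (fun x : ℕ => (x : ℤ)) hreq
      push_cast at this; linarith
    have : (m : ℤ) < q := by rw [hmz, hqz]; linarith
    exact_mod_cast this
  obtain ⟨i, hqi, hmi⟩ := exists_testBit_of_lt m q hmq
  -- i < t
  have hqP : q < P := Nat.mod_lt _ hP
  have hit : i < t := by
    by_contra hit
    push_neg at hit
    have : q < 2 ^ i := lt_of_lt_of_le hqP (Nat.pow_le_pow_right (by norm_num) hit)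
    rw [Nat.testBit_lt_two_pow this] at hqi
    exact Bool.false_ne_true hqi
  -- bits of n and r at position i
  have hri : r.testBit i = true := by
    have := Nat.testBit_mod_two_pow r t i
    rw [← hPdef, ← hq, hqi] at this
    simpa [hit] using this.symm
  have hni : n.testBit i = false := by
    have := Nat.testBit_mod_two_pow n t i
    rw [← hPdef, ← hm, hmi] at this
    simpa [hit] using this
  -- translate to division/mod form
  have hrd : r / 2 ^ i % 2 = 1 := by
    have := Nat.testBit_eq_decide_div_mod_eq (i := i) (x := r)
    rw [hri] at this
    exact of_decide_eq_true this.symm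
  have hnd : n / 2 ^ i % 2 = 0 := by
    have := Nat.testBit_eq_decide_div_mod_eq (i := i) (x := n)
    rw [hni] at this
    have h01 := Nat.mod_lt (n / 2 ^ i) (show 0 < 2 by norm_num)
    have : ¬ (n / 2 ^ i % 2 = 1) := of_decide_eq_false this.symm
    omega
  -- apply Lucas's theorem
  haveI : Fact (Nat.Prime 2) := ⟨Nat.prime_two⟩
  have hia : i < n + r + 1 := by
    have h2i : 2 ^ i ≤ q := by
      by_contra h
      push_neg at h
      rw [Nat.testBit_lt_two_pow h] at hqi
      exact Bool.false_ne_true hqi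
    have : q ≤ r := by omega
    have : i < 2 ^ i := Nat.lt_two_pow_self (n := i)
    omega
  have hbn : n < 2 ^ (n + r + 1) :=
    lt_of_lt_of_le (Nat.lt_two_pow_self (n := n)) (Nat.pow_le_pow_right (by norm_num) (by omega))
  have hbr : r < 2 ^ (n + r + 1) :=
    lt_of_lt_of_le (Nat.lt_two_pow_self (n := r)) (Nat.pow_le_pow_right (by norm_num) (by omega))
  have hlucas := Choose.choose_modEq_prod_range_choose_nat (p := 2) (n := n) (k := r)
      (a := n + r + 1) hbn hbr
  have hprod : (∏ j ∈ Finset.range (n + r + 1), Nat.choose (n / 2 ^ j % 2) (r / 2 ^ j % 2)) = 0 := by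
    apply Finset.prod_eq_zero (Finset.mem_range.mpr hia)
    rw [hnd, hrd]
    exact Nat.choose_eq_zero_of_lt (by norm_num)
  rw [hprod] at hlucas
  have : 2 ∣ n.choose r := (Nat.modEq_zero_iff_dvd).mp hlucas
  exact even_iff_two_dvd.mpr this
end

section
/- Let Q = 2^(2ℓ−1) for ℓ ≥ 1, and let i satisfy i ≡ 1 (mod 6), 1 < i < Q. Set b = (Q + i − 3)/3 (an integer). Then the binomial coefficient C(Q − i − 1, b) is even. -/
open Nat

/-- Shared binary digit. -/
def Sh (x y : ℕ) : Prop := ∃ p, x / 2 ^ p % 2 = 1 ∧ y / 2 ^ p % 2 = 1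

lemma sh_shift {c a : ℕ} (h : Sh (c / 4) (a / 4)) : Sh c a := by
  obtain ⟨p, h1, h2⟩ := h
  refine ⟨p + 2, ?_, ?_⟩ <;>
  · rw [show (2:ℕ) ^ (p + 2) = 4 * 2 ^ p by ring, ← Nat.div_div_eq_div_mul]
    assumption

lemma sh_drop {c a : ℕ} (hc : c % 2 = 0) (ha : a % 2 = 0) (h : Sh c (a + 1)) : Sh c a := by
  obtain ⟨p, h1, h2⟩ := h
  cases p with
  | zero => simp at h1; omega
  | succ p =>
    refine ⟨p + 1, h1, ?_⟩
    have e : (2:ℕ) ^ (p + 1) = 2 * 2 ^ p := by ring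
    rw [e, ← Nat.div_div_eq_div_mul] at h2 ⊢
    have : (a + 1) / 2 = a / 2 := by omega
    rw [← this]
    exact h2

lemma q3 (L : ℕ) : 2 ^ (2 * L + 1) % 3 = 2 := by
  induction L with
  | zero => norm_num
  | succ L IH =>
    have e : 2 ^ (2 * (L + 1) + 1) = 4 * 2 ^ (2 * L + 1) := by ring
    omega

lemma key (L : ℕ) : ∀ j c,
    (3 * c + 3 = 2 ^ (2 * L + 1) + j → j % 6 = 1 → 1 < j → j < 2 ^ (2 * L + 1) → Sh c j) ∧
    (3 * c = 2 ^ (2 * L + 1) + j → j % 6 = 4 → j < 2 ^ (2 * L + 1) → Sh c j) := by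
  induction L with
  | zero =>
    intro j c
    have e : (2:ℕ) ^ (2 * 0 + 1) = 2 := by norm_num
    constructor
    · intro _ _ _ h4; omega
    · intro _ h2 h3; omega
  | succ L IH =>
    intro j c
    have hQ : 2 ^ (2 * (L + 1) + 1) = 4 * 2 ^ (2 * L + 1) := by ring
    have hQ2 : 2 ^ (2 * L + 1) = 2 ^ (2 * L) * 2 := by ring
    have hQ3 := q3 L
    have e4 : (2:ℕ) ^ 2 = 4 := by norm_num
    have e2 : (2:ℕ) ^ 1 = 2 := by norm_num
    constructor
    · intro hEq h6 h1 hlt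
      rw [hQ] at hEq hlt
      rcases (by omega : j % 24 = 1 ∨ j % 24 = 7 ∨ j % 24 = 13 ∨ j % 24 = 19) with h | h | h | h
      · -- recurse via part A at (j/4 + 1)
        apply sh_shift
        apply sh_drop (by omega) (by omega)
        exact (IH (j / 4 + 1) (c / 4)).1 (by omega) (by omega) (by omega) (by omega)
      · exact ⟨2, by rw [e4]; omega, by rw [e4]; omega⟩
      · exact ⟨2, by rw [e4]; omega, by rw [e4]; omega⟩
      · -- recurse via part B at j/4
        apply sh_shift
        exact (IH (j / 4) (c / 4)).2 (by omega) (by omega) (by omega)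
    · intro hEq h6 hlt
      rw [hQ] at hEq hlt
      rcases (by omega : j % 24 = 4 ∨ j % 24 = 10 ∨ j % 24 = 16 ∨ j % 24 = 22) with h | h | h | h
      · exact ⟨2, by rw [e4]; omega, by rw [e4]; omega⟩
      · exact ⟨1, by rw [e2]; omega, by rw [e2]; omega⟩
      · -- recurse via part B at j/4
        apply sh_shift
        exact (IH (j / 4) (c / 4)).2 (by omega) (by omega) (by omega)
      · exact ⟨1, by rw [e2]; omega, by rw [e2]; omega⟩

lemma even_choose : ∀ (p k n : ℕ), k / 2 ^ p % 2 = 1 → n / 2 ^ p % 2 = 0 →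
    Nat.choose n k % 2 = 0 := by
  intro p
  induction p with
  | zero =>
    intro k n h1 h2
    simp only [pow_zero, Nat.div_one] at h1 h2
    have L0 : Nat.choose n k ≡ Nat.choose (n % 2) (k % 2) * Nat.choose (n / 2) (k / 2) [MOD 2] :=
      Choose.choose_modEq_choose_mod_mul_choose_div_nat
    rw [h1, h2] at L0
    have hc : Nat.choose 0 1 = 0 := rfl
    rw [hc, zero_mul] at L0
    have : Nat.choose n k % 2 = 0 % 2 := L0
    omega
  | succ p IH =>
    intro k n h1 h2
    have e : (2:ℕ) ^ (p + 1) = 2 * 2 ^ p := by ring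
    rw [e, ← Nat.div_div_eq_div_mul] at h1 h2
    have hY := IH (k / 2) (n / 2) h1 h2
    have L0 : Nat.choose n k ≡ Nat.choose (n % 2) (k % 2) * Nat.choose (n / 2) (k / 2) [MOD 2] :=
      Choose.choose_modEq_choose_mod_mul_choose_div_nat
    have hprod : Nat.choose (n % 2) (k % 2) * Nat.choose (n / 2) (k / 2) % 2 = 0 := by
      rw [Nat.mul_mod, hY, mul_zero]
      rfl
    have : Nat.choose n k % 2 = Nat.choose (n % 2) (k % 2) * Nat.choose (n / 2) (k / 2) % 2 := L0
    omega

lemma compl_bit (N p i : ℕ) (hiN : i < 2 ^ N) (h : i / 2 ^ p % 2 = 1) :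
    (2 ^ N - 1 - i) / 2 ^ p % 2 = 0 := by
  have hpN : p < N := by
    by_contra hc
    have h1 : 2 ^ N ≤ 2 ^ p := Nat.pow_le_pow_right (by norm_num) (by omega)
    have h2 : i / 2 ^ p = 0 := Nat.div_eq_of_lt (by omega)
    omega
  have hA : 0 < 2 ^ p := Nat.pow_pos (by norm_num)
  obtain ⟨B, hB⟩ : ∃ B, 2 ^ N = 2 * 2 ^ p * B := by
    refine ⟨2 ^ (N - p - 1), ?_⟩
    have e : (2:ℕ) ^ (p + 1 + (N - p - 1)) = 2 ^ N := by congr 1; omega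
    rw [← e, pow_add, pow_add, pow_one]
    ring
  set A := 2 ^ p with hAdef
  set a := i / A / 2 with hadef
  set s := i % A with hsdef
  have hs : s < A := Nat.mod_lt _ hA
  have hdiv : i / A = 2 * a + 1 := by
    have d2 := Nat.div_add_mod (i / A) 2
    omega
  have hi : i = 2 * A * a + A + s := by
    have d1 := Nat.div_add_mod i A
    rw [hdiv] at d1
    rw [← d1]; ring
  have hBpos : 0 < B := by
    rcases Nat.eq_zero_or_pos B with h0 | h0
    · rw [h0, mul_zero] at hB; omega
    · exact h0
  have ha : a + 1 ≤ B := by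
    by_contra hc
    push_neg at hc
    have : 2 * A * B ≤ 2 * A * a := Nat.mul_le_mul_left _ (by omega)
    have hlt : i < 2 * A * B := hB ▸ hiN
    nlinarith
  have key2 : 2 ^ N - 1 - i = A * (2 * (B - a - 1)) + (A - 1 - s) := by
    have c1 : i + 1 ≤ 2 ^ N := by omega
    have c2 : a + 1 ≤ B := ha
    have c3 : s + 1 ≤ A := hs
    zify [show i ≤ 2 ^ N - 1 by omega, show (1:ℕ) ≤ 2 ^ N by omega, show a ≤ B by omega,
      show (1:ℕ) ≤ B - a by omega, show s ≤ A - 1 by omega, show (1:ℕ) ≤ A by omega]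
    have hB' : (2 ^ N : ℤ) = 2 * A * B := by exact_mod_cast hB
    have hi' : (i : ℤ) = 2 * A * a + A + s := by exact_mod_cast hi
    linear_combination hB' - hi'
  rw [key2, Nat.mul_add_div hA, Nat.div_eq_of_lt (by omega)]
  omega

/-- Let Q = 2^(2ℓ−1) with ℓ ≥ 1, and let i ≡ 1 (mod 6) with 1 < i < Q.
Setting b = (Q + i − 3)/3, the binomial coefficient C(Q − i − 1, b) is even. -/
theorem choose_even_finite_escape (ℓ i : ℕ) (hℓ : 1 ≤ ℓ)
    (hi6 : i % 6 = 1) (hi1 : 1 < i) (hiQ : i < 2 ^ (2 * ℓ - 1)) :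
    Even ((2 ^ (2 * ℓ - 1) - i - 1).choose ((2 ^ (2 * ℓ - 1) + i - 3) / 3)) := by
  obtain ⟨L, hL⟩ : ∃ L, 2 * ℓ - 1 = 2 * L + 1 := ⟨ℓ - 1, by omega⟩
  rw [hL] at hiQ ⊢
  have hQ3 := q3 L
  have hQ2 : 2 ^ (2 * L + 1) = 2 ^ (2 * L) * 2 := by ring
  set b := (2 ^ (2 * L + 1) + i - 3) / 3 with hbdef
  have hb : 3 * b + 3 = 2 ^ (2 * L + 1) + i := by
    have := Nat.div_add_mod (2 ^ (2 * L + 1) + i - 3) 3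
    omega
  obtain ⟨p, hbp, hip⟩ := (key L i b).1 hb hi6 hi1 hiQ
  have hn : 2 ^ (2 * L + 1) - i - 1 = 2 ^ (2 * L + 1) - 1 - i := by omega
  rw [hn]
  have hcompl := compl_bit (2 * L + 1) p i hiQ hip
  have := even_choose p b (2 ^ (2 * L + 1) - 1 - i) hbp hcompl
  exact Nat.even_iff.mpr this
end
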